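/- Consider A_p(q,ξ,p) = 1/ξ + 2/(qp) - 1 where p = p(q,ξ) solves p = exp{-Lqξ/(ξ + pq(1-ξ)) - K}, L,K > 0, and fix q ∈ (0,1]. If L ≤ 1/(2q), then A_p (with p the stable root) is minimized over ξ ∈ (0,1] at ξ = 1, with minimum value (2/q)·exp{Lq + K}. -/

import Mathlib

open Real Set

lemma key11 (t s : ℝ) (ht : 0 < t) (hs : 0 ≤ s) (hts : t + s ≤ 1/2) :
    2 * t * (Real.exp s - 1) ≤ s := by
  have h1 : Real.exp (-s) * Real.exp s = 1 := by
    rw [← Real.exp_add]; simp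
  have h2 : -s + 1 ≤ Real.exp (-s) := Real.add_one_le_exp (-s)
  have h3 : (1 - s) * Real.exp s ≤ 1 := by nlinarith [Real.exp_pos s]
  have h4 : (1:ℝ) ≤ Real.exp s := Real.one_le_exp hs
  nlinarith

theorem stmt11 (L K q : ℝ) (hL : 0 < L) (hK : 0 < K) (hq : q ∈ Ioc (0:ℝ) 1)
    (hLq : L ≤ 1 / (2 * q)) :
    (∀ ξ p : ℝ, ξ ∈ Ioc (0:ℝ) 1 → p ∈ Ioc (0:ℝ) 1 →
      p = Real.exp (-(L * q * ξ) / (ξ + p * q * (1 - ξ)) - K) →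
      (2 / q) * Real.exp (L * q + K) ≤ 1 / ξ + 2 / (q * p) - 1) ∧
    Real.exp (-(L * q + K))
      = Real.exp (-(L * q * 1) / (1 + Real.exp (-(L * q + K)) * q * (1 - 1)) - K) ∧
    1 / (1:ℝ) + 2 / (q * Real.exp (-(L * q + K))) - 1 = (2 / q) * Real.exp (L * q + K) := by
  obtain ⟨hq0, hq1⟩ := hq
  have hLq2 : L * q ≤ 1/2 := by
    rw [le_div_iff₀ (by positivity)] at hLq
    nlinarith
  refine ⟨?_, ?_, ?_⟩
  · intro ξ p hξ hp heq
    obtain ⟨hξ0, hξ1⟩ := hξ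
    obtain ⟨hp0, hp1⟩ := hp
    have hpq : 0 ≤ p * q * (1 - ξ) :=
      mul_nonneg (mul_pos hp0 hq0).le (by linarith)
    have hD : 0 < ξ + p * q * (1 - ξ) := by linarith
    set t : ℝ := L * q * ξ / (ξ + p * q * (1 - ξ)) with htdef
    have ht0 : 0 < t := by positivity
    have htD : t * (ξ + p * q * (1 - ξ)) = L * q * ξ := by
      rw [htdef, div_mul_cancel₀ _ hD.ne']
    have htL : t ≤ L * q := by
      have h : t * ξ ≤ L * q * ξ := by nlinarith [mul_nonneg ht0.le hpq]
      exact le_of_mul_le_mul_right (by linarith) hξ0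
    set s : ℝ := L * q - t with hsdef
    have hs0 : 0 ≤ s := by linarith
    have hts : t + s ≤ 1/2 := by simp [hsdef]; linarith
    have hk := key11 t s ht0 hs0 hts
    have hrel : t * (p * q * (1 - ξ)) = ξ * s := by
      rw [hsdef]; nlinarith
    have hpe : p = Real.exp (-(t + K)) := by
      rw [heq]; congr 1; rw [htdef]; ring
    have hA : Real.exp (L * q + K) = Real.exp s * Real.exp (t + K) := by
      rw [← Real.exp_add]; congr 1; rw [hsdef]; ring
    have hAp : (0:ℝ) < Real.exp (t + K) := Real.exp_pos _
    have hEs : (0:ℝ) < Real.exp s := Real.exp_pos _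
    have hpinv : p * Real.exp (t + K) = 1 := by
      rw [hpe, ← Real.exp_add, show -(t + K) + (t + K) = 0 by ring, Real.exp_zero]
    have h1ξ : (1 - ξ) * (t * q) = ξ * s * Real.exp (t + K) := by
      linear_combination Real.exp (t + K) * hrel - t * q * (1 - ξ) * hpinv
    have h2 : 1 / ξ - 1 = s * Real.exp (t + K) / (t * q) := by
      field_simp
      linear_combination h1ξ
    have h3 : 2 / (q * p) = 2 * Real.exp (t + K) / q := by
      rw [hpe, Real.exp_neg]
      field_simp
    rw [h3, hA]
    have key2 : 0 ≤ (s + 2 * t - 2 * t * Real.exp s) * Real.exp (t + K) / (t * q) := by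
      apply div_nonneg _ (by positivity)
      exact mul_nonneg (by linarith) hAp.le
    have eqq : s * Real.exp (t + K) / (t * q) + 2 * Real.exp (t + K) / q
        - 2 / q * (Real.exp s * Real.exp (t + K))
        = (s + 2 * t - 2 * t * Real.exp s) * Real.exp (t + K) / (t * q) := by
      field_simp
    have h1x : 1 / ξ = 1 + s * Real.exp (t + K) / (t * q) := by linarith
    rw [h1x]
    linarith
  · norm_num
    ring_nf
  · have h := Real.exp_pos (-(L * q + K))
    rw [Real.exp_neg]
    field_simp
    ring
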